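/- Let h be a real number with h ≠ −k/2 for every integer k ≥ 0. Then for every integer n ≥ −1 and every polynomial f ∈ ℂ[X], the q_R-conformal symmetries satisfy the commutation relation [L₋ₙ, f(F)] = F^{n+1}∘f'(F) on ℂ[z], where f(F) denotes the operator obtained by substituting F into f (equivalently, [L₋ₙ, F^k] = k·F^{n+k} for all k ≥ 0). -/

import Mathlib

open Polynomial

noncomputable section

/-- Operators (ℂ-linear endomorphisms) on ℂ[z], realized as `Polynomial ℂ`. -/
abbrev E : Type := Module.End ℂ (Polynomial ℂ)

/-- The differentiation operator `D(p) = p'`. -/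
def Dop : E := Polynomial.derivative

/-- Multiplication by `z`. -/
def Mz : E := LinearMap.mulLeft ℂ (X : Polynomial ℂ)

/-- `l₋₁(p) = z·p`. -/
def lm1 : E := Mz

/-- `l₀(p) = z·p' + h·p`. -/
def l0 (h : ℝ) : E := Mz * Dop + (h : ℂ) • (1 : E)

/-- `l₁(p) = z·p'' + 2h·p'`. -/
def l1 (h : ℝ) : E := Mz * Dop ^ 2 + ((2 * h : ℝ) : ℂ) • Dop

/-- Commutator `[A,B] = A∘B − B∘A`. -/
def opComm (A B : E) : E := A * B - B * A

/-- The weight `w h n = n!·(2h)(2h+1)⋯(2h+n−1)`, i.e. the squared norm `⟨zⁿ, zⁿ⟩`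
in the unitarizable Verma module. -/
def w (h : ℝ) (n : ℕ) : ℝ := (n.factorial : ℝ) * ∏ i ∈ Finset.range n, (2 * h + (i : ℝ))

lemma Mz_apply' (p : Polynomial ℂ) : Mz p = X * p := rfl
lemma Dop_apply' (p : Polynomial ℂ) : Dop p = derivative p := rfl

lemma end_ext' {A B : E} (hAB : ∀ n : ℕ, A (X^n) = B (X^n)) : A = B := by
  refine LinearMap.ext fun p => ?_
  induction p using Polynomial.induction_on' with
  | add p q hp hq => simp [map_add, hp, hq]
  | monomial n a =>
    rw [← C_mul_X_pow_eq_monomial, ← smul_eq_C_mul, map_smul, map_smul, hAB]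

lemma L1_mono' (h : ℝ) (j : ℕ) :
    (Mz * Dop ^ (1+1) + (((1:ℂ)+1)*(h:ℂ)) • Dop ^ 1) (X^j : Polynomial ℂ)
      = (((j:ℂ)) * ((j:ℂ)-1+2*h)) • X^(j-1) := by
  have h2 : (Dop ^ (1+1) : E) = Dop * Dop := by norm_num [pow_two]
  rcases j with _ | j
  · simp [Mz_apply', Dop_apply', h2]
  rcases j with _ | j
  · simp only [h2, pow_one, LinearMap.add_apply, Module.End.mul_apply, LinearMap.smul_apply,
      Mz_apply', Dop_apply', derivative_X, derivative_one, mul_zero, zero_add,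
      Nat.sub_self, pow_zero]
    match_scalars
    push_cast; ring
  · simp only [h2, pow_one, LinearMap.add_apply, Module.End.mul_apply, LinearMap.smul_apply,
      Mz_apply', Dop_apply', derivative_X_pow, derivative_C_mul,
      ← smul_eq_C_mul, map_smul, mul_smul_comm, smul_smul, ← pow_succ',
      show j+1+1-1 = j+1 by omega, show j+1-1 = j by omega]
    match_scalars
    push_cast; ring

lemma L0_mono' (h : ℝ) (j : ℕ) :
    (Mz * Dop ^ (0+1) + (((0:ℂ)+1)*(h:ℂ)) • Dop ^ 0) (X^j : Polynomial ℂ)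
      = (((j:ℂ)) + h) • X^j := by
  have h1 : (Dop ^ (0+1) : E) = Dop := by norm_num
  rcases j with _ | j
  · simp [Mz_apply', Dop_apply', h1]
  · simp only [h1, pow_zero, Module.End.one_apply, LinearMap.add_apply, Module.End.mul_apply,
      LinearMap.smul_apply, Mz_apply', Dop_apply', derivative_X_pow,
      ← smul_eq_C_mul, mul_smul_comm, smul_smul, ← pow_succ',
      show j+1-1 = j by omega]
    match_scalars
    push_cast; ring

lemma opComm_add (A B C : E) : opComm A (B + C) = opComm A B + opComm A C := by
  simp only [opComm, mul_add, add_mul]; abel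

lemma opComm_smul (A : E) (c : ℂ) (B : E) : opComm A (c • B) = c • opComm A B := by
  simp only [opComm, mul_smul_comm, smul_mul_assoc, smul_sub]

lemma opComm_mul (A B C : E) : opComm A (B * C) = opComm A B * C + B * opComm A C := by
  simp only [opComm, sub_mul, mul_sub, mul_assoc]; abel


/-- For nondegenerate extremal weight `h`, for every `n ≥ −1` (written
`n = m − 1`, `m ∈ ℕ`) and every polynomial `f`, `[L₋ₙ, f(F)] = F^{n+1}∘f'(F)`. -/
theorem stmt_10 (h : ℝ) (hh : ∀ k : ℕ, h ≠ -(k : ℝ) / 2)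
    (F : E) (hF : ∀ n : ℕ, F (X ^ n) = (((n : ℂ) + 2 * h)⁻¹) • X ^ (n + 1))
    (L : ℤ → E)
    (hLpos : ∀ k : ℕ, L (k : ℤ) = Mz * Dop ^ (k + 1) + (((k : ℂ) + 1) * (h : ℂ)) • Dop ^ k)
    (hLneg : ∀ k : ℕ, 1 ≤ k → ∀ n : ℕ,
      L (-(k : ℤ)) (X ^ n) =
        (((n : ℂ) + ((k : ℂ) + 1) * (h : ℂ)) /
            ∏ i ∈ Finset.range k, ((n : ℂ) + 2 * h + (i : ℂ))) • X ^ (n + k))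
    :
    ∀ m : ℕ, ∀ f : Polynomial ℂ,
      opComm (L (1 - (m : ℤ))) (Polynomial.aeval F f) =
        F ^ m * Polynomial.aeval F (derivative f) := by
  have hc : ∀ n i : ℕ, ((n:ℂ) + 2*h + i) ≠ 0 := by
    have hc0 : ∀ n : ℕ, ((n:ℂ) + 2*h) ≠ 0 := by
      intro n hn
      apply hh n
      have h2 : ((n + 2*h : ℝ) : ℂ) = 0 := by push_cast; linear_combination hn
      have h3 : (n:ℝ) + 2*h = 0 := by exact_mod_cast h2
      linarith
    intro n i hz
    apply hc0 (n+i)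
    push_cast
    linear_combination hz
  have hc0 : ∀ n : ℕ, ((n:ℂ) + 2*h) ≠ 0 := fun n => by simpa using hc n 0
  have Fpow : ∀ m n : ℕ,
      (F ^ m) (X ^ n) = (∏ i ∈ Finset.range m, ((n:ℂ) + 2*h + i))⁻¹ • X ^ (n + m) := by
    intro m
    induction m with
    | zero => intro n; simp
    | succ m ih =>
      intro n
      rw [pow_succ, Module.End.mul_apply, hF, map_smul, ih, smul_smul]
      congr 1
      · rw [Finset.prod_range_succ', mul_inv, mul_comm]
        congr 1
        · congr 1
          exact Finset.prod_congr rfl fun i _ => by push_cast; ring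
        · congr 1; push_cast; ring
      · congr 1; omega
  -- key commutator
  have key : ∀ m : ℕ, opComm (L (1 - (m:ℤ))) F = F ^ m := by
    intro m
    rcases m with _ | m
    · apply end_ext'
      intro n
      simp only [opComm, LinearMap.sub_apply, Module.End.mul_apply]
      rw [show (1 - ((0:ℕ):ℤ)) = ((1:ℕ):ℤ) by norm_num, hLpos 1]
      rw [hF n, map_smul, show ((1:ℕ):ℂ) = ((1:ℂ)) by norm_num]
      rw [L1_mono' h (n+1), L1_mono' h n, map_smul, hF (n-1), pow_zero,
        Module.End.one_apply]
      rcases n with _ | j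
      · simp only [Nat.cast_zero, Nat.cast_one, Nat.zero_sub, zero_mul, zero_smul,
          Nat.zero_add, zero_add, sub_zero]
        rw [Nat.sub_self, pow_zero, smul_smul]
        have h1 : (2*(h:ℂ)) ≠ 0 := by
          have := hc 0 0; push_cast at this; simpa using this
        rw [show ((2*(h:ℂ))⁻¹ * (1 * (1 - 1 + 2*(h:ℂ)))) = 1 by
          rw [show (1:ℂ) - 1 + 2*(h:ℂ) = 2*h by ring, one_mul, inv_mul_cancel₀ h1]]
        rw [one_smul]
      · simp only [show j+1+1-1 = j+1 by omega, show j+1-1 = j by omega, smul_smul]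
        match_scalars
        push_cast
        have h1 := hc j 0
        have h2 := hc (j+1) 0
        push_cast at h1 h2
        simp only [add_zero] at h1 h2
        field_simp [h1, h2]
        ring
    rcases m with _ | k
    · apply end_ext'
      intro n
      simp only [opComm, LinearMap.sub_apply, Module.End.mul_apply]
      rw [show (1 - ((0+1:ℕ):ℤ)) = ((0:ℕ):ℤ) by norm_num, hLpos 0]
      rw [hF n, map_smul, show ((0:ℕ):ℂ) = ((0:ℂ)) by norm_num]
      rw [L0_mono' h (n+1), L0_mono' h n, map_smul, hF n, pow_one, hF n]
      match_scalars
      push_cast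
      have h1 := hc n 0
      push_cast at h1
      simp only [add_zero] at h1
      field_simp [h1]
      try ring
    · apply end_ext'
      intro n
      simp only [opComm, LinearMap.sub_apply, Module.End.mul_apply]
      rw [show (1 - ((k+1+1:ℕ):ℤ)) = -(((k+1:ℕ)):ℤ) by push_cast; ring]
      rw [hF n, map_smul, hLneg (k+1) (by omega) (n+1), hLneg (k+1) (by omega) n,
        map_smul, hF (n+(k+1)), Fpow (k+1+1) n]
      simp only [show n+1+(k+1) = n+(k+1+1) by omega, show n+(k+1)+1 = n+(k+1+1) by omega,
        smul_smul]
      match_scalars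
      have e1 : (∏ i ∈ Finset.range (k+1+1), ((n:ℂ) + 2*h + i))
          = ((n:ℂ)+2*h) * ∏ i ∈ Finset.range (k+1), ((n:ℂ) + 1 + 2*h + i) := by
        rw [Finset.prod_range_succ', mul_comm]
        congr 1
        · push_cast; ring
        · exact Finset.prod_congr rfl fun i _ => by push_cast; ring
      have hrel : (∏ i ∈ Finset.range (k+1), ((n:ℂ) + 2*h + i)) * ((n:ℂ)+2*h+((k:ℂ)+1))
          = ((n:ℂ)+2*h) * ∏ i ∈ Finset.range (k+1), ((n:ℂ) + 1 + 2*h + i) := by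
        have h2 := Finset.prod_range_succ (fun i => (n:ℂ)+2*h+i) (k+1)
        rw [e1] at h2
        push_cast at h2
        linear_combination -h2
      have h0 : ((n:ℂ)+2*h) ≠ 0 := by
        intro heq; exact hc n 0 (by push_cast; linear_combination heq)
      have hlast : ((n:ℂ)+((k:ℂ)+1)+2*h) ≠ 0 := by
        intro heq; exact hc n (k+1) (by push_cast; linear_combination heq)
      have hP0 : (∏ i ∈ Finset.range (k+1), ((n:ℂ) + 2*h + i)) ≠ 0 :=
        Finset.prod_ne_zero_iff.2 (fun i _ => hc n i)
      have hP1 : (∏ i ∈ Finset.range (k+1), ((n:ℂ) + 1 + 2*h + i)) ≠ 0 := by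
        rw [Finset.prod_ne_zero_iff]
        intro i _ heq
        exact hc (n+1) i (by push_cast; linear_combination heq)
      rw [e1]
      field_simp [h0, hP0, hP1, hlast]
      linear_combination ((n:ℂ)+(h:ℂ)*((k:ℂ)+1+1)) * hrel
  -- Leibniz ⇒ powers
  have comm_pow : ∀ m j : ℕ,
      opComm (L (1 - (m:ℤ))) (F ^ (j+1)) = ((j:ℂ)+1) • (F ^ m * F ^ j) := by
    intro m j
    induction j with
    | zero => simpa using key m
    | succ j ih =>
      rw [pow_succ, opComm_mul, ih, key m]
      rw [smul_mul_assoc, mul_assoc, ← pow_succ, ← pow_add, ← pow_add,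
        show m + (j+1) = j + 1 + m by omega]
      push_cast
      module
  intro m f
  induction f using Polynomial.induction_on' with
  | add p q hp hq =>
    rw [map_add, map_add, opComm_add, hp, hq, map_add, mul_add]
  | monomial k a =>
    rcases k with _ | j
    · rw [show ((monomial 0 a : Polynomial ℂ)) = C a from by simp, derivative_C, map_zero,
        mul_zero, aeval_C, opComm]
      simp [Algebra.algebraMap_eq_smul_one, mul_smul_comm, smul_mul_assoc]
    · rw [← C_mul_X_pow_eq_monomial, ← smul_eq_C_mul]
      rw [derivative_smul, derivative_X_pow, show j+1-1 = j by omega]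
      rw [map_smul, map_pow, aeval_X]
      rw [opComm_smul, comm_pow m j]
      rw [← smul_eq_C_mul, map_smul, map_smul, map_pow, aeval_X]
      rw [smul_smul, smul_smul, mul_smul_comm]
      congr 1
      push_cast
      ring

end
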